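/- arXiv:2306.01165 — 13 statements merged into one kernel-verified Lean document; each statement's English description precedes it below -/
import Mathlib

section
/- Let S be a t-conorm and R a fuzzy binary relation on X. If R = S(P, I) for some asymmetric fuzzy binary relation P and symmetric fuzzy binary relation I, then for every x, y ∈ X, I(x,y) = min(R(x,y), R(y,x)). -/
structure Tconorm where
  S : unitInterval → unitInterval → unitInterval
  comm : ∀ a b, S a b = S b a
  assoc : ∀ a b c, S a (S b c) = S (S a b) c
  mono : ∀ a b c d, a ≤ c → b ≤ d → S a b ≤ S c d
  S_zero : ∀ a, S a 0 = a
  S_one : ∀ a, S a 1 = 1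

structure Tnorm where
  T : unitInterval → unitInterval → unitInterval
  comm : ∀ a b, T a b = T b a
  assoc : ∀ a b c, T a (T b c) = T (T a b) c
  mono : ∀ a b c d, a ≤ c → b ≤ d → T a b ≤ T c d
  T_one : ∀ a, T a 1 = a
  T_zero : ∀ a, T a 0 = 0

/-- A fuzzy binary relation `P` is asymmetric. -/
def FAsymm {X : Type*} (P : X → X → unitInterval) : Prop :=
  ∀ x y, 0 < P x y → P y x = 0

/-- A fuzzy binary relation `I` is symmetric. -/
def FSymm {X : Type*} (I : X → X → unitInterval) : Prop :=
  ∀ x y, I x y = I y x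

/-- `(P, I)` is a weak decomposition of `R` with respect to the t-conorm `S`. -/
def IsWeakDecomp {X : Type*} (S : Tconorm) (R P I : X → X → unitInterval) : Prop :=
  FAsymm P ∧ FSymm I ∧ (∀ x y, R x y = S.S (P x y) (I x y)) ∧
    ∀ x y, I x y = 1 → P x y = 0

/-- `(P, I)` is a strong decomposition of `R` with respect to `(T, S)`. -/
def IsStrongDecomp {X : Type*} (T : Tnorm) (S : Tconorm)
    (R P I : X → X → unitInterval) : Prop :=
  FAsymm P ∧ FSymm I ∧ (∀ x y, R x y = S.S (P x y) (I x y)) ∧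
    ∀ x y, T.T (P x y) (I x y) = 0

/-- The triplet `(R, P, I)` is a fuzzy preference (FP1–FP6). -/
def IsFuzzyPref {X : Type*} (R P I : X → X → unitInterval) : Prop :=
  (∀ x y, 0 < P x y → P y x = 0) ∧
  (∀ x y, I x y = I y x) ∧
  (∀ x y, P x y ≤ R x y) ∧
  (∀ x y, R y x < R x y ↔ 0 < P x y) ∧
  (∀ x y, P x y = 0 → R x y = I x y) ∧
  (∀ x y z w, I x y ≤ I z w → P x y ≤ P z w → R x y ≤ R z w)

/-- If `R = S(P, I)` with `P` asymmetric and `I` symmetric, then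
`I(x,y) = min(R(x,y), R(y,x))`. -/
theorem symmetric_component_is_min {X : Type*} (S : Tconorm)
    (R P I : X → X → unitInterval) (hP : FAsymm P) (hI : FSymm I)
    (hdec : ∀ x y, R x y = S.S (P x y) (I x y)) :
    ∀ x y, I x y = min (R x y) (R y x) := by
  have hzero : ∀ a, S.S 0 a = a := fun a => by rw [S.comm, S.S_zero]
  have hle : ∀ a b, b ≤ S.S a b := fun a b => by
    have := S.mono 0 b a b (show (0:unitInterval) ≤ a from a.2.1) le_rfl
    rwa [hzero] at this
  intro x y
  rcases eq_or_lt_of_le (show (0:unitInterval) ≤ P x y from (P x y).2.1) with h | h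
  · have hRxy : R x y = I x y := by rw [hdec, ← h, hzero]
    have hRyx : I x y ≤ R y x := by rw [hdec, hI x y]; exact hle _ _
    rw [hRxy]
    exact (min_eq_left hRyx).symm
  · have h0 : P y x = 0 := hP x y h
    have hRyx : R y x = I x y := by rw [hdec, h0, hzero, hI]
    have hRxy : I x y ≤ R x y := by rw [hdec]; exact hle _ _
    rw [hRyx]
    exact (min_eq_right hRxy).symm
end

section
/- Let S be a t-conorm. Every fuzzy binary relation R on a set X with at least two elements can be expressed as R = S(P, I) with P asymmetric and I symmetric, if and only if S is continuous in its first coordinate (with respect to the Euclidean topology on [0,1]). -/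
lemma Tconorm.zero_S (S : Tconorm) (a : unitInterval) : S.S 0 a = a := by
  rw [S.comm, S.S_zero]

lemma Tconorm.one_S (S : Tconorm) (a : unitInterval) : S.S 1 a = 1 := by
  rw [S.comm, S.S_one]

/-- A monotone self-map of the unit interval whose range contains `[f 0, 1]`
is continuous. -/
lemma aux_mono_continuous {f : unitInterval → unitInterval} (hm : Monotone f)
    (hs : ∀ r, f 0 ≤ r → ∃ a, f a = r) : Continuous f := by
  rw [continuous_iff_continuousAt]
  intro a
  rw [continuousAt_iff_continuous_left_right]
  constructor
  · rcases eq_or_lt_of_le (hm (unitInterval.nonneg') : f 0 ≤ f a) with h0 | h0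
    · have hconst : ∀ x ∈ Set.Iic a, f x = f a := fun x hx =>
        le_antisymm (hm hx) (h0 ▸ hm (unitInterval.nonneg'))
      exact (continuousWithinAt_const (b := f a)).congr hconst (hconst a Set.self_mem_Iic)
    · refine continuousWithinAt_left_of_monotoneOn_of_exists_between
        (fun x _ y _ h => hm h) Filter.univ_mem fun b hb => ?_
      obtain ⟨d, hd1, hd2⟩ := exists_between (max_lt hb h0 : max b (f 0) < f a)
      obtain ⟨c, hc⟩ := hs d (le_of_lt ((le_max_right _ _).trans_lt hd1))
      exact ⟨c, trivial, hc ▸ ⟨(le_max_left _ _).trans_lt hd1, hd2⟩⟩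
  · refine continuousWithinAt_right_of_monotoneOn_of_exists_between
      (fun x _ y _ h => hm h) Filter.univ_mem fun b hb => ?_
    obtain ⟨d, hd1, hd2⟩ := exists_between hb
    obtain ⟨c, hc⟩ := hs d (le_of_lt ((hm (unitInterval.nonneg')).trans_lt hd1))
    exact ⟨c, trivial, hc ▸ ⟨hd1, hd2⟩⟩

/-- Intermediate value: continuity in the first coordinate gives solvability of
`S (a, b) = r` for `b ≤ r`. -/
lemma aux_exists_root (S : Tconorm) (hcont : ∀ b, Continuous fun a => S.S a b)
    {b r : unitInterval} (h : b ≤ r) : ∃ a, S.S a b = r := by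
  have hg : Continuous fun a : unitInterval => ((S.S a b : unitInterval) : ℝ) :=
    continuous_subtype_val.comp (hcont b)
  have hmem : (r : ℝ) ∈ Set.Icc ((fun a : unitInterval => ((S.S a b : unitInterval) : ℝ)) 0)
      ((fun a : unitInterval => ((S.S a b : unitInterval) : ℝ)) 1) := by
    simp only [S.zero_S, S.one_S]
    exact ⟨h, r.2.2⟩
  obtain ⟨a, ha⟩ := intermediate_value_univ (0 : unitInterval) 1 hg hmem
  exact ⟨a, Subtype.ext ha⟩

/-- Every fuzzy binary relation on a set with at least two elements can be written as
`S(P, I)` with `P` asymmetric and `I` symmetric iff `S` is continuous in the first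
coordinate. -/
theorem decomposable_iff_continuous_first {X : Type*} (hX : ∃ x y : X, x ≠ y)
    (S : Tconorm) :
    (∀ R : X → X → unitInterval, ∃ P I : X → X → unitInterval,
        FAsymm P ∧ FSymm I ∧ ∀ x y, R x y = S.S (P x y) (I x y)) ↔
    (∀ b, Continuous fun a => S.S a b) := by
  classical
  constructor
  · intro hdec b
    set f : unitInterval → unitInterval := fun a => S.S a b with hf
    have hm : Monotone f := fun a c h => S.mono _ _ _ _ h le_rfl
    have hf0 : f 0 = b := S.zero_S b
    refine aux_mono_continuous hm fun r hr => ?_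
    rw [hf0] at hr
    obtain ⟨x, y, hxy⟩ := hX
    set R : X → X → unitInterval := fun u v =>
      if u = x ∧ v = y then r else if u = y ∧ v = x then b else 0 with hR
    obtain ⟨P, I, hP, hI, hRPI⟩ := hdec R
    have hRxy : R x y = r := by simp [hR]
    have hRyx : R y x = b := by simp [hR, hxy, Ne.symm hxy]
    rcases (unitInterval.nonneg' : 0 ≤ P y x).eq_or_lt with h0 | h0
    · have hIyx : I y x = b := by
        have := hRPI y x
        rw [hRyx, ← h0, S.zero_S] at this
        exact this.symm
      refine ⟨P x y, ?_⟩
      have := hRPI x y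
      rw [hRxy, hI x y, hIyx] at this
      exact this.symm
    · have hPxy : P x y = 0 := hP y x h0
      have hrI : r = I x y := by
        have := hRPI x y
        rwa [hRxy, hPxy, S.zero_S] at this
      have hbr : r ≤ b := by
        have : I y x ≤ S.S (P y x) (I y x) := by
          conv_lhs => rw [← S.zero_S (I y x)]
          exact S.mono _ _ _ _ (unitInterval.nonneg') le_rfl
        rw [← hRPI y x, hRyx] at this
        rw [hrI, hI x y]
        exact this
      refine ⟨0, ?_⟩
      rw [hf0]
      exact le_antisymm hr hbr
  · intro hcont R
    refine ⟨fun u v => if h : R v u < R u v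
        then Classical.choose (aux_exists_root S hcont (le_of_lt h)) else 0,
      fun u v => min (R u v) (R v u), ?_, ?_, ?_⟩
    · intro u v huv
      have h1 : R v u < R u v := by
        by_contra h
        simp only [h, dif_neg] at huv
        exact lt_irrefl _ huv
      have h2 : ¬ R u v < R v u := not_lt.2 (le_of_lt h1)
      simp [h2]
    · intro u v; exact min_comm _ _
    · intro u v
      by_cases h : R v u < R u v
      · simp only [h, dif_pos]
        rw [min_eq_right (le_of_lt h)]
        exact (Classical.choose_spec (aux_exists_root S hcont (le_of_lt h))).symm
      · simp only [h, dif_neg, not_false_iff]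
        rw [min_eq_left (not_lt.1 h), S.zero_S]
end

section
/- Let S be a t-conorm and T a t-norm, with X a set of at least two elements. Every fuzzy binary relation on X strongly decomposes with respect to (T,S) in a unique way, if and only if S is continuous in the first component and for all w ∈ [0,1], the set D¹_S(w) ∩ D⁰_T(w) has exactly one element. -/
/-- The 1-interval of `w` for the t-conorm `S`. -/
def D1 (S : Tconorm) (w : unitInterval) : Set unitInterval := {t | S.S t w = 1}

/-- The 0-interval of `w` for the t-norm `T`. -/
def D0 (T : Tnorm) (w : unitInterval) : Set unitInterval := {t | T.T t w = 0}

namespace SDAux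

variable (S : Tconorm) (T : Tnorm)

local instance : Fact ((0:ℝ) ≤ 1) := ⟨zero_le_one⟩

lemma S_zero' (a : unitInterval) : S.S 0 a = a := by rw [S.comm]; exact S.S_zero a
lemma S_one' (a : unitInterval) : S.S 1 a = 1 := by rw [S.comm]; exact S.S_one a
lemma T_zero' (a : unitInterval) : T.T 0 a = 0 := by rw [T.comm]; exact T.T_zero a
lemma T_one' (a : unitInterval) : T.T 1 a = a := by rw [T.comm]; exact T.T_one a

lemma le_S (a b : unitInterval) : a ≤ S.S a b := by
  conv_lhs => rw [← S.S_zero a]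
  exact S.mono _ _ _ _ le_rfl unitInterval.nonneg'

lemma le_S' (a b : unitInterval) : b ≤ S.S a b := by
  rw [S.comm]; exact le_S S b a

lemma nProp (hs : ∀ w, ∃ a, D1 S w ∩ D0 T w = {a}) (w : unitInterval) :
    ∃ nw : unitInterval, S.S nw w = 1 ∧ T.T nw w = 0 ∧
      (∀ t, S.S t w = 1 ↔ nw ≤ t) ∧ (∀ t, T.T t w = 0 ↔ t ≤ nw) := by
  obtain ⟨a, ha⟩ := hs w
  have hmem : ∀ t, S.S t w = 1 → T.T t w = 0 → t = a := by
    intro t h1 h0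
    have ht : t ∈ D1 S w ∩ D0 T w := ⟨h1, h0⟩
    rw [ha] at ht; exact ht
  have haa : a ∈ D1 S w ∩ D0 T w := by rw [ha]; rfl
  have hD1 : ∀ t, S.S t w = 1 ↔ a ≤ t := by
    intro t
    constructor
    · intro h1
      by_contra h; push_neg at h
      have h0 : T.T t w = 0 :=
        le_antisymm (by calc T.T t w ≤ T.T a w := T.mono _ _ _ _ h.le le_rfl
          _ = 0 := haa.2) unitInterval.nonneg'
      exact absurd (hmem t h1 h0) h.ne
    · intro h
      exact le_antisymm unitInterval.le_one' (haa.1 ▸ S.mono _ _ _ _ h le_rfl)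
  refine ⟨a, haa.1, haa.2, hD1, ?_⟩
  intro t
  constructor
  · intro h0
    by_contra h; push_neg at h
    have h1 : S.S t w = 1 := (hD1 t).2 h.le
    exact absurd (hmem t h1 h0) (ne_of_gt h)
  · intro h
    exact le_antisymm (by calc T.T t w ≤ T.T a w := T.mono _ _ _ _ h le_rfl
      _ = 0 := haa.2) unitInterval.nonneg'

lemma noidem (hc : ∀ b, Continuous fun a => S.S a b)
    (hs : ∀ w, ∃ a, D1 S w ∩ D0 T w = {a}) {a : unitInterval}
    (ha : S.S a a = a) (ha1 : a ≠ 1) : a = 0 := by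
  by_contra ha0
  have ha0' : (0:unitInterval) < a := lt_of_le_of_ne unitInterval.nonneg' (Ne.symm ha0)
  have ha1' : a < 1 := lt_of_le_of_ne unitInterval.le_one' ha1
  obtain ⟨na, hna1, hna0, hD1, hD0⟩ := nProp S T hs a
  have hna : na < 1 := by
    rcases lt_or_eq_of_le (unitInterval.le_one' (t := na)) with h | h
    · exact h
    · exfalso; rw [h, T_one' T] at hna0; exact ha0 hna0
  obtain ⟨u0, hu0l, hu0r⟩ := exists_between (max_lt ha1' hna)
  have hiv := intermediate_value_Icc (unitInterval.nonneg' : (0:unitInterval) ≤ 1)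
    ((hc a).continuousOn)
  have hu0m : u0 ∈ Set.Icc (S.S 0 a) (S.S 1 a) := by
    rw [S_zero' S, S_one' S]
    exact ⟨(lt_of_le_of_lt (le_max_left _ _) hu0l).le, hu0r.le⟩
  obtain ⟨u, -, hu⟩ := hiv hu0m
  have hu' : S.S u a = u0 := hu
  have key : S.S u0 a = u0 := by
    rw [← hu', ← S.assoc u a a, ha]
  have h1 : S.S u0 a = 1 :=
    (hD1 u0).2 (lt_of_le_of_lt (le_max_right _ _) hu0l).le
  rw [key] at h1; exact (ne_of_lt hu0r) h1

lemma noflat (hc : ∀ b, Continuous fun a => S.S a b)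
    (hs : ∀ w, ∃ a, D1 S w ∩ D0 T w = {a}) {p q b : unitInterval}
    (hpq : S.S p b = S.S q b) (h1 : S.S q b ≠ 1) : p = q := by
  wlog hle : p ≤ q generalizing p q
  · have h1' : S.S p b ≠ 1 := by rw [hpq]; exact h1
    exact (this hpq.symm h1' (le_of_not_ge hle)).symm
  rcases eq_or_lt_of_le hle with rfl | hlt
  · rfl
  exfalso
  set a := S.S q b with ha
  have hqa : q ≤ a := le_S S q b
  have ha0 : a ≠ 0 := by
    intro h
    exact absurd (lt_of_lt_of_le hlt (h ▸ hqa)) (not_lt.2 unitInterval.nonneg')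
  have hiv := intermediate_value_Icc (unitInterval.nonneg' : (0:unitInterval) ≤ 1)
    ((hc p).continuousOn)
  have hq' : q ∈ Set.Icc (S.S 0 p) (S.S 1 p) := by
    rw [S_zero' S, S_one' S]; exact ⟨hlt.le, unitInterval.le_one'⟩
  obtain ⟨d, -, hd⟩ := hiv hq'
  have hd' : S.S d p = q := hd
  clear hd
  have hd0 : d ≠ 0 := by
    rintro rfl; rw [S_zero' S] at hd'; exact hlt.ne hd'
  set A := {t : unitInterval | S.S t a = a} with hA
  have hdA : d ∈ A := by
    show S.S d a = a
    calc S.S d a = S.S d (S.S p b) := by rw [ha, hpq]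
    _ = S.S (S.S d p) b := S.assoc d p b
    _ = a := by rw [hd']
  have hbdd : BddAbove A := ⟨1, fun x _ => unitInterval.le_one'⟩
  have hclosed : IsClosed A := IsClosed.preimage (hc a) isClosed_singleton
  set z := sSup A with hz
  have hzA : z ∈ A := hclosed.csSup_mem ⟨d, hdA⟩ hbdd
  have hzA' : S.S z a = a := hzA
  have hzz : S.S z z = z := by
    have h2 : S.S z z ∈ A := by
      show S.S (S.S z z) a = a
      rw [← S.assoc z z a, hzA', hzA']
    exact le_antisymm (le_csSup hbdd h2) (le_S S z z)
  have hz1 : z ≠ 1 := by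
    intro h
    have h3 := hzA'
    rw [h, S_one' S] at h3
    exact h1 h3.symm
  have hz0 : z = 0 := noidem S T hc hs hzz hz1
  have hdz : d ≤ z := le_csSup hbdd hdA
  rw [hz0] at hdz
  exact hd0 (le_antisymm hdz unitInterval.nonneg')

lemma uniqP (hc : ∀ b, Continuous fun a => S.S a b)
    (hs : ∀ w, ∃ a, D1 S w ∩ D0 T w = {a}) {p p' b : unitInterval}
    (hS : S.S p b = S.S p' b) (h0 : T.T p b = 0) (h0' : T.T p' b = 0) : p = p' := by
  by_cases h1 : S.S p' b = 1
  · obtain ⟨nb, -, -, hD1, hD0⟩ := nProp S T hs b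
    have hp : p = nb := le_antisymm ((hD0 p).1 h0) ((hD1 p).1 (hS.trans h1))
    have hp' : p' = nb := le_antisymm ((hD0 p').1 h0') ((hD1 p').1 h1)
    rw [hp, hp']
  · exact noflat S T hc hs hS h1

lemma exP (hc : ∀ b, Continuous fun a => S.S a b)
    (hs : ∀ w, ∃ a, D1 S w ∩ D0 T w = {a}) {a b : unitInterval} (hba : b ≤ a) :
    ∃ p, S.S p b = a ∧ T.T p b = 0 := by
  obtain ⟨nb, hnb1, hnb0, hD1, hD0⟩ := nProp S T hs b
  have hiv := intermediate_value_Icc (unitInterval.nonneg' : (0:unitInterval) ≤ nb)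
    ((hc b).continuousOn)
  have hm : a ∈ Set.Icc (S.S 0 b) (S.S nb b) := by
    rw [S_zero' S, hnb1]; exact ⟨hba, unitInterval.le_one'⟩
  obtain ⟨p, hp, hpa⟩ := hiv hm
  have hpa' : S.S p b = a := hpa
  exact ⟨p, hpa', (hD0 p).2 hp.2⟩

lemma forced {X : Type*} {R P I : X → X → unitInterval} (h : IsStrongDecomp T S R P I)
    {x y : X} (hlt : R y x < R x y) :
    P y x = 0 ∧ I x y = R y x ∧ S.S (P x y) (R y x) = R x y ∧ T.T (P x y) (R y x) = 0 := by
  obtain ⟨hA, hSym, hR, hT⟩ := h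
  have hp : P x y ≠ 0 := by
    intro h0
    have h1 : R x y = I x y := by rw [hR x y, h0, S_zero' S]
    have h2 : I x y ≤ R y x := by
      rw [hR y x, hSym x y]; exact le_S' S (P y x) (I y x)
    have h3 : R x y ≤ R y x := by rw [h1]; exact h2
    exact absurd hlt (not_lt.2 h3)
  have hPyx : P y x = 0 := hA x y (lt_of_le_of_ne unitInterval.nonneg' (Ne.symm hp))
  have hI : I x y = R y x := by
    rw [hR y x, hPyx, S_zero' S]; exact hSym x y
  refine ⟨hPyx, hI, ?_, ?_⟩
  · rw [← hI]; exact (hR x y).symm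
  · rw [← hI]; exact hT x y

lemma forcedEq (hc : ∀ b, Continuous fun a => S.S a b)
    (hs : ∀ w, ∃ a, D1 S w ∩ D0 T w = {a}) {X : Type*}
    {R P I : X → X → unitInterval} (h : IsStrongDecomp T S R P I)
    {x y : X} (heq : R x y = R y x) : P x y = 0 ∧ I x y = R x y := by
  obtain ⟨hA, hSym, hR, hT⟩ := h
  have hp : P x y = 0 := by
    by_contra h0
    have hPyx : P y x = 0 := hA x y (lt_of_le_of_ne unitInterval.nonneg' (Ne.symm h0))
    have hI : I x y = R y x := by
      rw [hR y x, hPyx, S_zero' S]; exact hSym x y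
    have hxy2 : S.S (P x y) (I x y) = S.S 0 (I x y) := by
      rw [S_zero' S, ← hR x y, hI, heq]
    exact h0 (uniqP S T hc hs hxy2 (hT x y) (T_zero' T (I x y)))
  exact ⟨hp, by rw [hR x y, hp, S_zero' S]⟩

lemma pairDecomp {X : Type*} {x0 y0 : X} (hxy : x0 ≠ y0) {t w : unitInterval}
    (ht1 : S.S t w = 1) (ht0 : T.T t w = 0)
    {R Pt I0 : X → X → unitInterval}
    (hR1 : R x0 y0 = 1) (hR2 : R y0 x0 = w)
    (hR0 : ∀ x y, ¬(x = x0 ∧ y = y0) → ¬(x = y0 ∧ y = x0) → R x y = 0)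
    (hP1 : Pt x0 y0 = t) (hP0 : ∀ x y, ¬(x = x0 ∧ y = y0) → Pt x y = 0)
    (hI1 : I0 x0 y0 = w) (hI2 : I0 y0 x0 = w)
    (hI0 : ∀ x y, ¬(x = x0 ∧ y = y0) → ¬(x = y0 ∧ y = x0) → I0 x y = 0) :
    IsStrongDecomp T S R Pt I0 := by
  have hswap : ∀ x y : X, ¬(x = x0 ∧ y = y0) → ¬(y = y0 ∧ x = x0) := by
    rintro x y h ⟨h1, h2⟩; exact h ⟨h2, h1⟩
  refine ⟨?_, ?_, ?_, ?_⟩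
  · intro x y hxy'
    by_cases hc1 : x = x0 ∧ y = y0
    · apply hP0
      rintro ⟨h5, h6⟩
      exact hxy (hc1.1.symm.trans h6)
    · rw [hP0 x y hc1] at hxy'; exact absurd hxy' (lt_irrefl 0)
  · intro x y
    by_cases hc1 : x = x0 ∧ y = y0
    · obtain ⟨rfl, rfl⟩ := hc1; rw [hI1, hI2]
    · by_cases hc2 : x = y0 ∧ y = x0
      · obtain ⟨h5, h6⟩ := hc2; rw [h5, h6, hI1, hI2]
      · rw [hI0 x y hc1 hc2, hI0 y x]
        · rintro ⟨h5, h6⟩; exact hc2 ⟨h6, h5⟩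
        · rintro ⟨h5, h6⟩; exact hc1 ⟨h6, h5⟩
  · intro x y
    by_cases hc1 : x = x0 ∧ y = y0
    · obtain ⟨rfl, rfl⟩ := hc1
      rw [hR1, hP1, hI1, ht1]
    · by_cases hc2 : x = y0 ∧ y = x0
      · obtain ⟨h5, h6⟩ := hc2
        rw [h5, h6]
        have hP' : Pt y0 x0 = 0 := hP0 y0 x0 (by rintro ⟨h5, h6⟩; exact hxy h5.symm)
        rw [hR2, hP', hI2, S_zero' S]
      · rw [hR0 x y hc1 hc2, hP0 x y hc1, hI0 x y hc1 hc2, S.S_zero]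
  · intro x y
    by_cases hc1 : x = x0 ∧ y = y0
    · obtain ⟨rfl, rfl⟩ := hc1
      rw [hP1, hI1]; exact ht0
    · rw [hP0 x y hc1]; exact T_zero' T _

end SDAux

open SDAux in
/-- Every fuzzy binary relation on a set with at least two elements strongly decomposes
w.r.t. `(T, S)` in a unique way iff `S` is continuous in the first coordinate and every
intersection `D¹_S(w) ∩ D⁰_T(w)` is a singleton. -/
theorem strong_decomposable_unique_iff {X : Type*} (hX : ∃ x y : X, x ≠ y)
    (S : Tconorm) (T : Tnorm) :
    (∀ R : X → X → unitInterval, ∃ P I : X → X → unitInterval,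
        IsStrongDecomp T S R P I ∧
        ∀ P' I' : X → X → unitInterval, IsStrongDecomp T S R P' I' → P' = P ∧ I' = I) ↔
    ((∀ b, Continuous fun a => S.S a b) ∧ ∀ w, ∃ a, D1 S w ∩ D0 T w = {a}) := by
  classical
  haveI : Fact ((0:ℝ) ≤ 1) := ⟨zero_le_one⟩
  obtain ⟨x0, y0, hxy⟩ := hX
  constructor
  · intro H
    have surj : ∀ a b : unitInterval, b < a → ∃ p, S.S p b = a ∧ T.T p b = 0 := by
      intro a b hba
      obtain ⟨P, I, hd, -⟩ :=
        H (fun x y => if x = x0 ∧ y = y0 then a else if x = y0 ∧ y = x0 then b else 0)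
      have hR1 : (if x0 = x0 ∧ y0 = y0 then a else if x0 = y0 ∧ y0 = x0 then b else 0) = a := by
        rw [if_pos ⟨rfl, rfl⟩]
      have hR2 : (if y0 = x0 ∧ x0 = y0 then a else if y0 = y0 ∧ x0 = x0 then b else 0) = b := by
        rw [if_neg (fun hh => hxy hh.2), if_pos ⟨rfl, rfl⟩]
      have hlt : (if y0 = x0 ∧ x0 = y0 then a else if y0 = y0 ∧ x0 = x0 then b else 0) <
          (if x0 = x0 ∧ y0 = y0 then a else if x0 = y0 ∧ y0 = x0 then b else 0) := by
        rw [hR1, hR2]; exact hba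
      obtain ⟨-, -, h3, h4⟩ := forced S T hd hlt
      rw [hR1, hR2] at h3; rw [hR2] at h4
      exact ⟨P x0 y0, h3, h4⟩
    constructor
    · intro b
      have hmono : Monotone (fun a => S.S a b) := fun u v huv => S.mono u b v b huv le_rfl
      have hmem : ∀ t, S.S t b ∈ Set.Icc b (1:unitInterval) :=
        fun t => ⟨le_S' S t b, unitInterval.le_one'⟩
      have hgmono : Monotone (fun t => (⟨S.S t b, hmem t⟩ : Set.Icc b (1:unitInterval))) :=
        fun u v huv => Subtype.mk_le_mk.2 (hmono huv)
      have hgsurj : Function.Surjective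
          (fun t => (⟨S.S t b, hmem t⟩ : Set.Icc b (1:unitInterval))) := by
        rintro ⟨c, hc1, hc2⟩
        rcases eq_or_lt_of_le hc1 with heq | hlt'
        · exact ⟨0, Subtype.ext (show S.S 0 b = c by rw [S_zero' S]; exact heq)⟩
        · obtain ⟨p, hp1, -⟩ := surj c b hlt'
          exact ⟨p, Subtype.ext hp1⟩
      have hgcont := hgmono.continuous_of_surjective hgsurj
      exact continuous_subtype_val.comp hgcont
    · intro w
      by_cases hw : w = 1
      · subst hw
        refine ⟨0, Set.eq_singleton_iff_unique_mem.2 ⟨⟨S.S_one 0, T.T_one 0⟩, ?_⟩⟩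
        rintro t ⟨-, ht0⟩
        have ht0' : T.T t 1 = 0 := ht0
        rw [T.T_one] at ht0'; exact ht0'
      · have hw1 : w < 1 := lt_of_le_of_ne unitInterval.le_one' hw
        obtain ⟨P, I, hd, hu⟩ :=
          H (fun x y => if x = x0 ∧ y = y0 then 1 else if x = y0 ∧ y = x0 then w else 0)
        have hR1 : (if x0 = x0 ∧ y0 = y0 then (1:unitInterval)
            else if x0 = y0 ∧ y0 = x0 then w else 0) = 1 := by
          rw [if_pos ⟨rfl, rfl⟩]
        have hR2 : (if y0 = x0 ∧ x0 = y0 then (1:unitInterval)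
            else if y0 = y0 ∧ x0 = x0 then w else 0) = w := by
          rw [if_neg (fun hh => hxy hh.2), if_pos ⟨rfl, rfl⟩]
        have hlt : (if y0 = x0 ∧ x0 = y0 then (1:unitInterval)
              else if y0 = y0 ∧ x0 = x0 then w else 0) <
            (if x0 = x0 ∧ y0 = y0 then (1:unitInterval)
              else if x0 = y0 ∧ y0 = x0 then w else 0) := by
          rw [hR1, hR2]; exact hw1
        obtain ⟨-, -, h3, h4⟩ := forced S T hd hlt
        rw [hR1, hR2] at h3; rw [hR2] at h4
        refine ⟨P x0 y0, Set.eq_singleton_iff_unique_mem.2 ⟨⟨h3, h4⟩, ?_⟩⟩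
        rintro t ⟨ht1, ht0⟩
        have ht1' : S.S t w = 1 := ht1
        have ht0' : T.T t w = 0 := ht0
        have hdt : IsStrongDecomp T S
            (fun x y => if x = x0 ∧ y = y0 then 1 else if x = y0 ∧ y = x0 then w else 0)
            (fun x y => if x = x0 ∧ y = y0 then t else 0)
            (fun x y => if (x = x0 ∧ y = y0) ∨ (x = y0 ∧ y = x0) then w else 0) := by
          refine pairDecomp S T hxy ht1' ht0' ?_ ?_ ?_ ?_ ?_ ?_ ?_ ?_
          · exact hR1
          · exact hR2
          · intro x y hc1 hc2
            show (if x = x0 ∧ y = y0 then (1:unitInterval)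
              else if x = y0 ∧ y = x0 then w else 0) = 0
            rw [if_neg hc1, if_neg hc2]
          · show (if x0 = x0 ∧ y0 = y0 then t else 0) = t
            rw [if_pos ⟨rfl, rfl⟩]
          · intro x y hc1
            show (if x = x0 ∧ y = y0 then t else 0) = 0
            rw [if_neg hc1]
          · show (if (x0 = x0 ∧ y0 = y0) ∨ (x0 = y0 ∧ y0 = x0) then w else 0) = w
            rw [if_pos (Or.inl ⟨rfl, rfl⟩)]
          · show (if (y0 = x0 ∧ x0 = y0) ∨ (y0 = y0 ∧ x0 = x0) then w else 0) = w
            rw [if_pos (Or.inr ⟨rfl, rfl⟩)]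
          · intro x y hc1 hc2
            show (if (x = x0 ∧ y = y0) ∨ (x = y0 ∧ y = x0) then w else 0) = 0
            rw [if_neg (fun h => h.elim hc1 hc2)]
        obtain ⟨hPeq, -⟩ := hu _ _ hdt
        have h8 : (if x0 = x0 ∧ y0 = y0 then t else 0) = P x0 y0 :=
          congrFun (congrFun hPeq x0) y0
        rw [if_pos ⟨rfl, rfl⟩] at h8
        exact h8
  · rintro ⟨hc, hs⟩ R
    refine ⟨fun x y =>
        if h : R y x < R x y then Classical.choose (exP S T hc hs h.le) else 0,
      fun x y => min (R x y) (R y x), ?_⟩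
    set Pf : X → X → unitInterval := fun x y =>
      if h : R y x < R x y then Classical.choose (exP S T hc hs h.le) else 0 with hPf
    have hPspec : ∀ x y (h : R y x < R x y),
        S.S (Pf x y) (R y x) = R x y ∧ T.T (Pf x y) (R y x) = 0 := by
      intro x y h
      have he : Pf x y = Classical.choose (exP S T hc hs h.le) := by
        simp only [hPf]; rw [dif_pos h]
      rw [he]; exact Classical.choose_spec (exP S T hc hs h.le)
    have hP0 : ∀ x y, ¬(R y x < R x y) → Pf x y = 0 := by
      intro x y h; simp only [hPf]; rw [dif_neg h]
    refine ⟨⟨?_, ?_, ?_, ?_⟩, ?_⟩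
    · intro x y h
      by_cases hlt : R y x < R x y
      · exact hP0 y x (fun h' => absurd hlt (lt_asymm h'))
      · rw [hP0 x y hlt] at h; exact absurd h (lt_irrefl 0)
    · intro x y; exact min_comm _ _
    · intro x y
      by_cases hlt : R y x < R x y
      · have h5 := (hPspec x y hlt).1
        show R x y = S.S (Pf x y) (min (R x y) (R y x))
        rw [min_eq_right hlt.le]; exact h5.symm
      · show R x y = S.S (Pf x y) (min (R x y) (R y x))
        rw [hP0 x y hlt, S_zero' S, min_eq_left (not_lt.1 hlt)]
    · intro x y
      by_cases hlt : R y x < R x y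
      · have h5 := (hPspec x y hlt).2
        show T.T (Pf x y) (min (R x y) (R y x)) = 0
        rw [min_eq_right hlt.le]; exact h5
      · show T.T (Pf x y) (min (R x y) (R y x)) = 0
        rw [hP0 x y hlt]; exact T_zero' T _
    · intro P' I' hd'
      constructor
      · funext x y
        rcases lt_trichotomy (R y x) (R x y) with hlt | heq | hgt
        · obtain ⟨-, -, h3, h4⟩ := forced S T hd' hlt
          have h5 := hPspec x y hlt
          exact uniqP S T hc hs (h3.trans h5.1.symm) h4 h5.2
        · have h6 := (forcedEq S T hc hs hd' heq.symm).1
          rw [h6, hP0 x y (by rw [heq]; exact lt_irrefl _)]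
        · have h6 := (forced S T hd' hgt).1
          rw [h6, hP0 x y (lt_asymm hgt)]
      · funext x y
        rcases lt_trichotomy (R y x) (R x y) with hlt | heq | hgt
        · have h6 := (forced S T hd' hlt).2.1
          show I' x y = min (R x y) (R y x)
          rw [h6, min_eq_right hlt.le]
        · have h6 := (forcedEq S T hc hs hd' heq.symm).2
          show I' x y = min (R x y) (R y x)
          rw [h6, min_eq_left (le_of_eq heq.symm)]
        · have h6 := (forced S T hd' hgt).2.1
          have h7 : I' x y = I' y x := hd'.2.1 x y
          show I' x y = min (R x y) (R y x)
          rw [h7, h6, min_eq_left hgt.le]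
end

section
/- Let S be a t-conorm continuous in the first coordinate, and X a set with at least two elements. Every fuzzy binary relation R on X has a unique weak decomposition with respect to S if and only if S is strictly increasing in the first coordinate, i.e., for all x < y in [0,1] and z < 1, S(x,z) < S(y,z). -/
/-- For `S` continuous in the first coordinate, every fuzzy binary relation has a unique
weak decomposition iff `S` is strictly increasing in the first coordinate. -/
theorem weak_decomp_unique_iff_strict {X : Type*} (hX : ∃ x y : X, x ≠ y)
    (S : Tconorm) (hc : ∀ b, Continuous fun a => S.S a b) :
    (∀ R : X → X → unitInterval, ∃ P I : X → X → unitInterval,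
        IsWeakDecomp S R P I ∧
        ∀ P' I' : X → X → unitInterval, IsWeakDecomp S R P' I' → P' = P ∧ I' = I) ↔
    (∀ x y z : unitInterval, x < y → z < 1 → S.S x z < S.S y z) := by
  classical
  have h01 : (0:unitInterval) ≠ 1 := by intro h; simpa using congrArg Subtype.val h
  have hzero : ∀ i : unitInterval, S.S 0 i = i := fun i => (S.comm 0 i).trans (S.S_zero i)
  have hone : ∀ i : unitInterval, S.S 1 i = 1 := fun i => (S.comm 1 i).trans (S.S_one i)
  constructor
  · -- uniqueness → strictness
    intro huniq x y z hxy hz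
    by_contra hlt
    push_neg at hlt
    have heq : S.S x z = S.S y z :=
      le_antisymm (S.mono _ _ _ _ hxy.le le_rfl) hlt
    obtain ⟨a, b, hab⟩ := hX
    set P1 : X → X → unitInterval := fun c d => if c = a ∧ d = b then y else 0 with hP1def
    set P2 : X → X → unitInterval := fun c d => if c = a ∧ d = b then x else 0 with hP2def
    set I1 : X → X → unitInterval :=
      fun c d => if (c = a ∧ d = b) ∨ (c = b ∧ d = a) then z else 0 with hI1def
    set R0 : X → X → unitInterval := fun c d => S.S (P1 c d) (I1 c d) with hR0def
    have hI1symm : FSymm I1 := by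
      intro c d
      simp only [hI1def]
      exact if_congr (by tauto) rfl rfl
    have hasym : ∀ w : unitInterval,
        FAsymm (fun c d => if c = a ∧ d = b then w else 0) := by
      intro w c d h
      by_cases hcd : c = a ∧ d = b
      · have : ¬(d = a ∧ c = b) := fun h' => hab (h'.1.symm.trans hcd.2)
        simp [this]
      · simp only [if_neg hcd] at h
        exact absurd h (lt_irrefl 0)
    have hIne : ∀ c d, I1 c d ≠ 1 := by
      intro c d
      simp only [hI1def]
      by_cases h : (c = a ∧ d = b) ∨ (c = b ∧ d = a)
      · rw [if_pos h]; exact hz.ne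
      · rw [if_neg h]; exact h01
    have hd1 : IsWeakDecomp S R0 P1 I1 :=
      ⟨hasym y, hI1symm, fun c d => rfl, fun c d h => absurd h (hIne c d)⟩
    have hR02 : ∀ c d, R0 c d = S.S (P2 c d) (I1 c d) := by
      intro c d
      by_cases h : c = a ∧ d = b
      · simp only [hR0def, hP1def, hP2def, hI1def, if_pos h, if_pos (Or.inl h)]
        exact heq.symm
      · simp only [hR0def, hP1def, hP2def, if_neg h]
    have hd2 : IsWeakDecomp S R0 P2 I1 :=
      ⟨hasym x, hI1symm, hR02, fun c d h => absurd h (hIne c d)⟩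
    obtain ⟨P, I, hd, hu⟩ := huniq R0
    have h1 := (hu P1 I1 hd1).1
    have h2 := (hu P2 I1 hd2).1
    have hPP : P1 a b = P2 a b := by rw [h1, h2]
    have hcond : a = a ∧ b = b := ⟨rfl, rfl⟩
    simp only [hP1def, hP2def, if_pos hcond] at hPP
    exact hxy.ne' hPP
  · -- strictness → uniqueness
    intro hs R
    haveI : PreconnectedSpace unitInterval := by infer_instance
    have key : ∀ i r : unitInterval, i ≤ r → ∃ p, S.S p i = r ∧ (i = 1 → p = 0) := by
      intro i r hir
      by_cases hi : i = 1
      · refine ⟨0, ?_, fun _ => rfl⟩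
        subst hi
        have hr1 : r = 1 := le_antisymm unitInterval.le_one' hir
        rw [hr1]; exact S.S_one 0
      · have hcont : Continuous fun p : unitInterval => ((S.S p i : unitInterval) : ℝ) :=
          continuous_subtype_val.comp (hc i)
        have hmem : (r : ℝ) ∈ Set.Icc ((S.S 0 i : unitInterval) : ℝ) ((S.S 1 i : unitInterval) : ℝ) := by
          rw [hzero, hone]
          exact ⟨hir, r.2.2⟩
        obtain ⟨p, hp⟩ := intermediate_value_univ (0:unitInterval) 1 hcont hmem
        exact ⟨p, Subtype.ext hp, fun h => absurd h hi⟩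
    choose f hf hf1 using key
    have uniq : ∀ p q i : unitInterval, (i = 1 → p = 0) → (i = 1 → q = 0) →
        S.S p i = S.S q i → p = q := by
      intro p q i hp hq h
      have hle : i ≤ 1 := unitInterval.le_one'
      rcases eq_or_lt_of_le hle with hi | hi
      · rw [hp hi, hq hi]
      · by_contra hne
        rcases lt_or_gt_of_ne hne with h' | h'
        · exact absurd h (hs p q i h' hi).ne
        · exact absurd h.symm (hs q p i h' hi).ne
    set I0 : X → X → unitInterval := fun u v => min (R u v) (R v u) with hI0def
    set P0 : X → X → unitInterval :=
      fun u v => f (I0 u v) (R u v) (min_le_left _ _) with hP0def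
    have hSP : ∀ u v, S.S (P0 u v) (I0 u v) = R u v := fun u v => hf _ _ _
    have hP01 : ∀ u v, I0 u v = 1 → P0 u v = 0 := fun u v => hf1 _ _ _
    have hPzero : ∀ u v, R u v ≤ R v u → P0 u v = 0 := by
      intro u v h
      have hI : I0 u v = R u v := min_eq_left h
      apply uniq _ 0 (I0 u v) (hP01 u v) (fun _ => rfl)
      rw [hSP, hzero, hI]
    have hasymm : FAsymm P0 := by
      intro u v h
      rcases le_total (R v u) (R u v) with h' | h'
      · exact hPzero v u h'
      · exact absurd (hPzero u v h') h.ne'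
    have hsym0 : FSymm I0 := fun u v => min_comm _ _
    refine ⟨P0, I0, ⟨hasymm, hsym0, fun u v => (hSP u v).symm, hP01⟩, ?_⟩
    rintro P' I' ⟨ha', hs', hR', h1'⟩
    have hIle : ∀ u v, I' u v ≤ R u v := by
      intro u v
      calc I' u v = S.S 0 (I' u v) := (hzero _).symm
        _ ≤ S.S (P' u v) (I' u v) := S.mono _ _ _ _ unitInterval.nonneg' le_rfl
        _ = R u v := (hR' u v).symm
    have hIeq : ∀ u v, R u v ≤ R v u → I' u v = R u v := by
      intro u v h
      by_cases hp : P' u v = 0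
      · have := hR' u v
        rw [hp, hzero] at this
        exact this.symm
      · have hpv : P' v u = 0 :=
          ha' u v (lt_of_le_of_ne unitInterval.nonneg' (Ne.symm hp))
        have hvu : R v u = I' v u := by rw [hR' v u, hpv, hzero]
        have h2 : I' u v = R v u := (hs' u v).trans hvu.symm
        have h3 : R u v = R v u := le_antisymm h (by rw [← h2]; exact hIle u v)
        rw [h2, h3]
    have hI'eq : ∀ u v, I' u v = I0 u v := by
      intro u v
      rcases le_total (R u v) (R v u) with h | h
      · rw [hIeq u v h]; exact (min_eq_left h).symm
      · rw [hs' u v, hIeq v u h]; exact (min_eq_right h).symm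
    constructor
    · funext u v
      apply uniq _ _ (I0 u v) (fun h => h1' u v (by rw [hI'eq u v]; exact h)) (hP01 u v)
      rw [hSP, ← hI'eq u v]
      exact (hR' u v).symm
    · funext u v
      exact hI'eq u v
end

section
/- Let R be a fuzzy binary relation on X. Define I(x,y) = min(R(x,y), R(y,x)) and P_Ł(x,y) = R(x,y) − R(y,x) if R(x,y) > R(y,x), and 0 otherwise. Then (P_Ł, I) is a weak decomposition of R with respect to the Łukasiewicz t-conorm S_Ł(a,b) = min(1, a+b): P_Ł is asymmetric, I is symmetric, R(x,y) = min(1, P_Ł(x,y) + I(x,y)) for all x,y, and I(x,y) = 1 implies P_Ł(x,y) = 0. -/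
/-- The canonical pair `(P_Ł, I)` is a weak decomposition of `R` with respect to the
Łukasiewicz t-conorm `S_Ł(a,b) = min(1, a + b)`. -/
theorem lukasiewicz_weak_decomposition {X : Type*} (R : X → X → ℝ)
    (hR : ∀ x y, R x y ∈ Set.Icc (0 : ℝ) 1) :
    let I : X → X → ℝ := fun x y => min (R x y) (R y x)
    let P : X → X → ℝ := fun x y => if R y x < R x y then R x y - R y x else 0
    (∀ x y, 0 < P x y → P y x = 0) ∧
    (∀ x y, I x y = I y x) ∧
    (∀ x y, R x y = min 1 (P x y + I x y)) ∧
    (∀ x y, I x y = 1 → P x y = 0) := by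
  intro I P
  refine ⟨?_, ?_, ?_, ?_⟩
  · intro x y h
    simp only [P] at h ⊢
    split_ifs at h ⊢ with h1 h2
    all_goals first | linarith | rfl
  · intro x y; exact min_comm _ _
  · intro x y
    simp only [P, I]
    rcases lt_trichotomy (R y x) (R x y) with h | h | h
    · rw [if_pos h, min_eq_right h.le, min_eq_right (by linarith [(hR x y).2])]
      ring
    · rw [if_neg (by rw [h]; exact lt_irrefl _), min_eq_left h.ge, zero_add,
        min_eq_right (hR x y).2]
    · rw [if_neg (not_lt.mpr h.le), min_eq_left h.le, zero_add,
        min_eq_right (hR x y).2]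
  · intro x y h
    simp only [I, P] at *
    have h1 : R x y ≥ 1 := by rw [← h]; exact min_le_left _ _
    have h2 : R y x ≥ 1 := by rw [← h]; exact min_le_right _ _
    have : R x y = R y x := le_antisymm (le_trans (hR x y).2 h2) (le_trans (hR y x).2 h1)
    rw [if_neg (by rw [this]; exact lt_irrefl _)]
end

section
/- Let R be a fuzzy binary relation on X. Define I(x,y) = min(R(x,y), R(y,x)) and P(x,y) = (R(x,y) − R(y,x))/(1 − R(y,x)) if R(x,y) > R(y,x), and 0 otherwise. Then (P, I) is a weak decomposition of R with respect to the probabilistic sum t-conorm S_P(a,b) = a + b − ab: P is asymmetric, I is symmetric, R(x,y) = P(x,y) + I(x,y) − P(x,y)·I(x,y) for all x,y, and I(x,y) = 1 implies P(x,y) = 0. -/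
/-- The canonical pair `(P, I)` is a weak decomposition of `R` with respect to the
probabilistic sum t-conorm `S_P(a,b) = a + b - a*b`. -/
theorem probabilistic_weak_decomposition {X : Type*} (R : X → X → ℝ)
    (hR : ∀ x y, R x y ∈ Set.Icc (0 : ℝ) 1) :
    let I : X → X → ℝ := fun x y => min (R x y) (R y x)
    let P : X → X → ℝ := fun x y =>
      if R y x < R x y then (R x y - R y x) / (1 - R y x) else 0
    (∀ x y, 0 < P x y → P y x = 0) ∧
    (∀ x y, I x y = I y x) ∧
    (∀ x y, R x y = P x y + I x y - P x y * I x y) ∧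
    (∀ x y, I x y = 1 → P x y = 0) := by
  intro I P
  refine ⟨?_, ?_, ?_, ?_⟩
  · intro x y hP
    simp only [P]
    rw [if_neg]
    intro h
    simp only [P] at hP
    rw [if_neg (not_lt.mpr h.le)] at hP
    exact lt_irrefl 0 hP
  · intro x y
    simp only [I, min_comm]
  · intro x y
    simp only [I, P]
    by_cases h : R y x < R x y
    · rw [if_pos h, min_eq_right h.le]
      have h1 : (1 : ℝ) - R y x ≠ 0 := by
        have := (hR x y).2
        linarith
      field_simp
      ring
    · rw [if_neg h, min_eq_left (not_lt.mp h)]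
      ring
  · intro x y hI
    simp only [I] at hI
    have h1 : R x y ≤ R y x := by
      have := (hR x y).2
      have h2 := min_le_left (R x y) (R y x)
      have h3 := min_le_right (R x y) (R y x)
      rw [hI] at h2 h3
      linarith
    simp only [P, if_neg (not_lt.mpr h1)]
end

section
/- Let S be a t-conorm, R a fuzzy binary relation on X, and (P,I) a weak decomposition of R with respect to S. Then: (FP1) P is asymmetric; (FP2) I is symmetric; (FP3) P(x,y) ≤ R(x,y) for all x,y; (FP5) P(x,y) = 0 implies R(x,y) = I(x,y); (FP6) if I(x,y) ≤ I(z,w) and P(x,y) ≤ P(z,w) then R(x,y) ≤ R(z,w); and R(x,y) > R(y,x) implies P(x,y) > 0. Moreover, if for every t ∈ [0,1) there is a neighborhood of 0 on which s ↦ S(s,t) is strictly increasing, then also P(x,y) > 0 implies R(x,y) > R(y,x). -/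
/-- Any weak decomposition of `R` satisfies FP1, FP2, FP3, FP5, FP6 and the direct
implication of FP4; moreover if `S(·, t)` is strictly increasing on a neighborhood of `0`
for every `t < 1`, the converse implication of FP4 also holds. -/
theorem weak_decomposition_properties {X : Type*} (S : Tconorm)
    (R P I : X → X → unitInterval) (h : IsWeakDecomp S R P I) :
    FAsymm P ∧
    FSymm I ∧
    (∀ x y, P x y ≤ R x y) ∧
    (∀ x y, P x y = 0 → R x y = I x y) ∧
    (∀ x y z w, I x y ≤ I z w → P x y ≤ P z w → R x y ≤ R z w) ∧
    (∀ x y, R y x < R x y → 0 < P x y) ∧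
    ((∀ t : unitInterval, t < 1 → ∃ U ∈ nhds (0 : unitInterval),
        StrictMonoOn (fun s => S.S s t) U) →
      ∀ x y, 0 < P x y → R y x < R x y) := by
  obtain ⟨hasym, hsym, hR, hPI⟩ := h
  have hIR : ∀ x y, I x y ≤ R x y := by
    intro x y
    calc I x y = S.S 0 (I x y) := by rw [S.comm, S.S_zero]
    _ ≤ S.S (P x y) (I x y) := S.mono _ _ _ _ (unitInterval.nonneg' ) le_rfl
    _ = R x y := (hR x y).symm
  have hFP5 : ∀ x y, P x y = 0 → R x y = I x y := by
    intro x y hp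
    rw [hR, hp, S.comm, S.S_zero]
  refine ⟨hasym, hsym, ?_, hFP5, ?_, ?_, ?_⟩
  · intro x y
    calc P x y = S.S (P x y) 0 := (S.S_zero _).symm
    _ ≤ S.S (P x y) (I x y) := S.mono _ _ _ _ le_rfl unitInterval.nonneg'
    _ = R x y := (hR x y).symm
  · intro x y z w hI hP
    rw [hR, hR]
    exact S.mono _ _ _ _ hP hI
  · intro x y hlt
    rcases lt_or_eq_of_le (unitInterval.nonneg' : 0 ≤ P x y) with h0 | h0
    · exact h0
    · exfalso
      have h1 : R x y = I x y := hFP5 x y h0.symm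
      have h2 : R x y ≤ R y x := by
        rw [h1, hsym x y]; exact hIR y x
      exact absurd hlt (not_lt.mpr h2)
  · intro hstrict x y hpos
    have hyx : R y x = I x y := by
      rw [hFP5 y x (hasym x y hpos), hsym y x]
    have hI1 : I x y < 1 := by
      rcases lt_or_eq_of_le (unitInterval.le_one' : I x y ≤ 1) with h1 | h1
      · exact h1
      · exact absurd (hPI x y h1) (ne_of_gt hpos)
    obtain ⟨U, hU, hmono⟩ := hstrict (I x y) hI1
    obtain ⟨ε, hε, hball⟩ := Metric.mem_nhds_iff.mp hU
    set p : ℝ := min ((P x y : ℝ)) (ε / 2) with hp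
    have hp0 : 0 < p := lt_min (by exact_mod_cast hpos) (by linarith)
    have hp1 : p ≤ 1 := le_trans (min_le_left _ _) (P x y).2.2
    set u : unitInterval := ⟨p, le_of_lt hp0, hp1⟩ with hu
    have huU : u ∈ U := by
      apply hball
      simp only [Metric.mem_ball, Subtype.dist_eq]
      simp only [hu, Set.Icc.coe_zero, dist_zero_right]
      rw [Real.norm_eq_abs, abs_of_pos hp0]
      exact lt_of_le_of_lt (min_le_right _ _) (by linarith)
    have h0U : (0 : unitInterval) ∈ U := hball (Metric.mem_ball_self hε)
    have hlt : S.S 0 (I x y) < S.S u (I x y) := by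
      have := hmono h0U huU (show (0:unitInterval) < u from by
        rw [← Subtype.coe_lt_coe]; exact_mod_cast hp0)
      exact this
    have hle : S.S u (I x y) ≤ R x y := by
      rw [hR]
      refine S.mono _ _ _ _ ?_ le_rfl
      rw [← Subtype.coe_le_coe]
      exact min_le_left _ _
    rw [hyx]
    calc I x y = S.S 0 (I x y) := by rw [S.comm, S.S_zero]
    _ < S.S u (I x y) := hlt
    _ ≤ R x y := hle
end

section
/- Let R be a fuzzy binary relation on a set X. There exists at most one weak decomposition (P,I) of R with respect to the maximum t-conorm S_max such that (R,P,I) is a fuzzy preference; i.e., if (P,I) and (P',I') are weak decompositions of R with respect to max and both (R,P,I) and (R,P',I') satisfy FP1–FP6, then P = P' and I = I'. -/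
/-- `(P, I)` is a weak decomposition of `R` with respect to the maximum t-conorm. -/
def IsWeakDecompMax {X : Type*} (R P I : X → X → unitInterval) : Prop :=
  FAsymm P ∧ FSymm I ∧ (∀ x y, R x y = max (P x y) (I x y)) ∧
    ∀ x y, I x y = 1 → P x y = 0

lemma decomp_formula {X : Type*} (R P I : X → X → unitInterval)
    (h : IsWeakDecompMax R P I) (hp : IsFuzzyPref R P I) (x y : X) :
    P x y = (if R y x < R x y then R x y else 0) ∧ I x y = min (R x y) (R y x) := by
  obtain ⟨ha, hs, hm, -⟩ := h
  obtain ⟨-, -, -, hp4, hp5, -⟩ := hp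
  by_cases hlt : R y x < R x y
  · have hpos : 0 < P x y := (hp4 x y).mp hlt
    have hyx : P y x = 0 := ha x y hpos
    have hIyx : R y x = I y x := hp5 y x hyx
    have hIxy : I x y = R y x := by rw [hs x y, ← hIyx]
    constructor
    · simp only [hlt, if_true]
      have hthis := hm x y
      rw [hIxy] at hthis
      rcases max_cases (P x y) (R y x) with ⟨he, _⟩ | ⟨he, _⟩
      · rw [he] at hthis; exact hthis.symm
      · rw [he] at hthis; exact absurd hthis.le (not_le.mpr hlt)
    · rw [hIxy, min_eq_right hlt.le]
  · have hP0 : P x y = 0 := by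
      have := (hp4 x y).not.mp hlt
      exact le_antisymm (not_lt.mp this) (P x y).2.1
    have hR : R x y = I x y := hp5 x y hP0
    refine ⟨by simp [hlt, hP0], ?_⟩
    rw [← hR, min_eq_left (not_lt.mp hlt)]

/-- There is at most one weak decomposition of `R` with respect to the maximum t-conorm
whose induced triplet is a fuzzy preference. -/
theorem max_unique_preference_decomposition {X : Type*}
    (R P I P' I' : X → X → unitInterval)
    (h : IsWeakDecompMax R P I) (h' : IsWeakDecompMax R P' I')
    (hp : IsFuzzyPref R P I) (hp' : IsFuzzyPref R P' I') :
    P = P' ∧ I = I' := by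
  constructor <;> funext x y
  · rw [(decomp_formula R P I h hp x y).1, (decomp_formula R P' I' h' hp' x y).1]
  · rw [(decomp_formula R P I h hp x y).2, (decomp_formula R P' I' h' hp' x y).2]
end

section
/- Let S be a t-conorm continuous in its first coordinate, and X a set with at least two elements. Suppose there exist w, s, t ∈ [0,1] with s ≠ t and S(t,w) = S(s,w) > w. Then there exists a fuzzy binary relation R on X admitting two distinct weak decompositions (P,I) and (P',I) with respect to S such that both triplets (R,P,I) and (R,P',I) are fuzzy preferences. -/
/-- If `S` is continuous in the first coordinate and there are `w, s, t` with `s ≠ t` and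
`S(t,w) = S(s,w) > w`, then some fuzzy binary relation admits two distinct weak
decompositions both inducing fuzzy preferences. -/
theorem non_unique_preference_decompositions {X : Type*} (hX : ∃ x y : X, x ≠ y)
    (S : Tconorm) (hc : ∀ b, Continuous fun a => S.S a b)
    (h : ∃ w s t : unitInterval, s ≠ t ∧ S.S t w = S.S s w ∧ w < S.S t w) :
    ∃ R P P' I : X → X → unitInterval, P ≠ P' ∧
      IsWeakDecomp S R P I ∧ IsWeakDecomp S R P' I ∧
      IsFuzzyPref R P I ∧ IsFuzzyPref R P' I := by
  classical
  obtain ⟨x0, y0, hxy⟩ := hX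
  obtain ⟨w, s, t, hst, hSS, hw⟩ := h
  have hS0 : ∀ a : unitInterval, S.S 0 a = a := fun a => by
    rw [S.comm]; exact S.S_zero a
  have ht : 0 < t := by
    rcases eq_or_lt_of_le (unitInterval.nonneg' : (0:unitInterval) ≤ t) with h0 | h0
    · rw [← h0, hS0] at hw; exact absurd hw (lt_irrefl w)
    · exact h0
  have hs : 0 < s := by
    rcases eq_or_lt_of_le (unitInterval.nonneg' : (0:unitInterval) ≤ s) with h0 | h0
    · rw [hSS, ← h0, hS0] at hw; exact absurd hw (lt_irrefl w)
    · exact h0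
  have hw1 : w ≠ 1 := fun h1 => absurd (hw.trans_le unitInterval.le_one') (by rw [h1]; exact lt_irrefl _)
  set R : X → X → unitInterval := fun x y => if x = x0 ∧ y = y0 then S.S t w else w with hR
  set I : X → X → unitInterval := fun _ _ => w with hI
  have key : ∀ p : unitInterval, 0 < p → S.S p w = S.S t w →
      IsWeakDecomp S R (fun x y => if x = x0 ∧ y = y0 then p else 0) I ∧
      IsFuzzyPref R (fun x y => if x = x0 ∧ y = y0 then p else 0) I := by
    intro p hp hpe
    set P : X → X → unitInterval := fun x y => if x = x0 ∧ y = y0 then p else 0 with hP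
    have hPpos : ∀ x y, 0 < P x y → x = x0 ∧ y = y0 := by
      intro x y hpos
      by_contra hc'
      simp only [hP, if_neg hc'] at hpos
      exact lt_irrefl _ hpos
    have hasymm : FAsymm P := by
      intro x y hpos
      obtain ⟨hx, hy⟩ := hPpos x y hpos
      have hne : ¬ (y = x0 ∧ x = y0) := by
        rintro ⟨h1, h2⟩
        exact hxy (hx ▸ h2)
      simp only [hP]; rw [if_neg hne]
    have hdecomp : ∀ x y, R x y = S.S (P x y) (I x y) := by
      intro x y
      simp only [hR, hP, hI]
      by_cases hc' : x = x0 ∧ y = y0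
      · rw [if_pos hc', if_pos hc', hpe]
      · rw [if_neg hc', if_neg hc', hS0]
    have hwleR : ∀ x y, w ≤ R x y := by
      intro x y
      simp only [hR]
      by_cases hc' : x = x0 ∧ y = y0
      · rw [if_pos hc']; exact hw.le
      · rw [if_neg hc']
    refine ⟨⟨hasymm, fun _ _ => rfl, hdecomp, ?_⟩, hasymm, fun _ _ => rfl, ?_, ?_, ?_, ?_⟩
    · intro x y h1
      exact absurd h1 hw1
    · -- FP3
      intro x y
      simp only [hP]
      by_cases hc' : x = x0 ∧ y = y0
      · rw [if_pos hc']
        have : p ≤ S.S p w := by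
          calc p = S.S p 0 := (S.S_zero p).symm
          _ ≤ S.S p w := S.mono _ _ _ _ le_rfl unitInterval.nonneg'
        rw [hR]; dsimp only; rw [if_pos hc', ← hpe]; exact this
      · rw [if_neg hc']; exact unitInterval.nonneg'
    · -- FP4
      intro x y
      by_cases hc' : x = x0 ∧ y = y0
      · have hne : ¬ (y = x0 ∧ x = y0) := by
          rintro ⟨h1, h2⟩; exact hxy (hc'.1 ▸ h2)
        simp only [hR, hP]
        rw [if_pos hc', if_pos hc', if_neg hne]
        exact ⟨fun _ => hp, fun _ => hw⟩
      · constructor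
        · intro hlt
          exfalso
          have : R x y = w := by simp only [hR]; rw [if_neg hc']
          exact absurd (this ▸ hlt) (not_lt.2 (hwleR y x))
        · intro hpos
          exact absurd (hPpos x y hpos) hc'
    · -- FP5
      intro x y hP0
      by_cases hc' : x = x0 ∧ y = y0
      · exfalso
        simp only [hP] at hP0
        rw [if_pos hc'] at hP0
        exact hp.ne' hP0
      · simp only [hR, hI]; rw [if_neg hc']
    · -- FP6
      intro a b c d hIle hPle
      by_cases hab : a = x0 ∧ b = y0
      · simp only [hP] at hPle
        rw [if_pos hab] at hPle
        by_cases hcd : c = x0 ∧ d = y0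
        · simp only [hR]; rw [if_pos hab, if_pos hcd]
        · rw [if_neg hcd] at hPle
          exact absurd hPle (not_le.2 hp)
      · have : R a b = w := by simp only [hR]; rw [if_neg hab]
        rw [this]; exact hwleR c d
  obtain ⟨hwd1, hfp1⟩ := key t ht rfl
  obtain ⟨hwd2, hfp2⟩ := key s hs hSS.symm
  refine ⟨R, _, _, I, ?_, hwd1, hwd2, hfp1, hfp2⟩
  intro heq
  have h2 := congrFun (congrFun heq x0) y0
  simp only [if_pos (show x0 = x0 ∧ y0 = y0 from ⟨rfl, rfl⟩)] at h2
  exact hst h2.symm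
end

section
/- Let S be a t-conorm continuous in its first coordinate with the property that for all w, s, t ∈ [0,1], if S(t,w) = S(s,w) and s ≠ t then S(t,w) = w. Then for any fuzzy binary relation R on X, there is at most one weak decomposition (P,I) of R with respect to S such that (R,P,I) is a fuzzy preference. -/
/-- If `S` is continuous in the first coordinate and `S(t,w) = S(s,w)` with `s ≠ t`
implies `S(t,w) = w`, then each fuzzy binary relation admits at most one weak
decomposition inducing a fuzzy preference. -/
theorem unique_preference_decomposition {X : Type*} (S : Tconorm)
    (hc : ∀ b, Continuous fun a => S.S a b)
    (hq : ∀ w s t : unitInterval, S.S t w = S.S s w → s ≠ t → S.S t w = w)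
    (R P I P' I' : X → X → unitInterval)
    (h : IsWeakDecomp S R P I) (h' : IsWeakDecomp S R P' I')
    (hp : IsFuzzyPref R P I) (hp' : IsFuzzyPref R P' I') :
    P = P' ∧ I = I' := by

  obtain ⟨hPa, hIs, hR, _⟩ := h
  obtain ⟨hPa', hIs', hR', _⟩ := h'
  obtain ⟨_, _, _, hFP4, hFP5, _⟩ := hp
  obtain ⟨_, _, _, hFP4', hFP5', _⟩ := hp'
  have pos_of_ne : ∀ a : unitInterval, a ≠ 0 → 0 < a := fun a ha =>
    lt_of_le_of_ne (Subtype.coe_le_coe.mp a.2.1) (Ne.symm ha)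
  -- I x y = R y x when P x y > 0, and both P's vanish simultaneously
  have hIeq : ∀ x y, I x y = I' x y := by
    intro x y
    by_cases h0 : P x y = 0
    · have h0' : P' x y = 0 := by
        by_contra hne
        have hlt : R y x < R x y := (hFP4' x y).mpr (pos_of_ne _ hne)
        have : 0 < P x y := (hFP4 x y).mp hlt
        exact this.ne' h0
      rw [← hFP5 x y h0, ← hFP5' x y h0']
    · have hposP : 0 < P x y := pos_of_ne _ h0
      have hlt : R y x < R x y := (hFP4 x y).mpr hposP
      have hposP' : 0 < P' x y := (hFP4' x y).mp hlt
      have hyx : P y x = 0 := hPa x y hposP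
      have hyx' : P' y x = 0 := hPa' x y hposP'
      have e1 : I x y = R y x := by rw [hIs x y, ← hFP5 y x hyx]
      have e2 : I' x y = R y x := by rw [hIs' x y, ← hFP5' y x hyx']
      rw [e1, e2]
  constructor
  · funext x y
    by_contra hne
    have hS : S.S (P x y) (I x y) = S.S (P' x y) (I x y) := by
      rw [← hR x y, hR' x y, hIeq x y]
    have hRI : R x y = I x y := by
      rw [hR x y]
      exact hq (I x y) (P' x y) (P x y) hS (fun hpe => hne hpe.symm)
    by_cases h0 : P x y = 0
    · have h0' : P' x y ≠ 0 := fun hc => hne (h0.trans hc.symm)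
      have hposP' : 0 < P' x y := pos_of_ne _ h0'
      have hlt : R y x < R x y := (hFP4' x y).mpr hposP'
      have hyx' : P' y x = 0 := hPa' x y hposP'
      have e2 : I x y = R y x := by
        rw [hIeq x y, hIs' x y, ← hFP5' y x hyx']
      rw [hRI, e2] at hlt
      exact lt_irrefl _ hlt
    · have hposP : 0 < P x y := pos_of_ne _ h0
      have hlt : R y x < R x y := (hFP4 x y).mpr hposP
      have hyx : P y x = 0 := hPa x y hposP
      have e1 : I x y = R y x := by rw [hIs x y, ← hFP5 y x hyx]
      rw [hRI, e1] at hlt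
      exact lt_irrefl _ hlt
  · funext x y
    exact hIeq x y
end

section
/- Every fuzzy binary relation R on X strongly decomposes, in a unique way, with respect to the Łukasiewicz t-norm T_Ł(x,y) = max(0, x+y−1) and the Łukasiewicz t-conorm S_Ł(x,y) = min(1, x+y). Explicitly, the unique strong decomposition is given by I(x,y) = min(R(x,y), R(y,x)) and P(x,y) = R(x,y) − R(y,x) if R(x,y) > R(y,x), 0 otherwise. -/
/-- Every fuzzy binary relation strongly decomposes, in a unique way, with respect to the
Łukasiewicz t-norm and t-conorm; the decomposition is given explicitly. -/
theorem lukasiewicz_unique_strong_decomposition {X : Type*} (R : X → X → ℝ)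
    (hR : ∀ x y, R x y ∈ Set.Icc (0 : ℝ) 1) :
    let I : X → X → ℝ := fun x y => min (R x y) (R y x)
    let P : X → X → ℝ := fun x y => if R y x < R x y then R x y - R y x else 0
    ((∀ x y, 0 < P x y → P y x = 0) ∧
     (∀ x y, I x y = I y x) ∧
     (∀ x y, R x y = min 1 (P x y + I x y)) ∧
     (∀ x y, max 0 (P x y + I x y - 1) = 0)) ∧
    (∀ P' I' : X → X → ℝ,
      (∀ x y, P' x y ∈ Set.Icc (0 : ℝ) 1) → (∀ x y, I' x y ∈ Set.Icc (0 : ℝ) 1) →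
      (∀ x y, 0 < P' x y → P' y x = 0) → (∀ x y, I' x y = I' y x) →
      (∀ x y, R x y = min 1 (P' x y + I' x y)) →
      (∀ x y, max 0 (P' x y + I' x y - 1) = 0) →
      P' = P ∧ I' = I) := by
  intro I P
  have hsum : ∀ x y, P x y + I x y = R x y := by
    intro x y
    simp only [P, I]
    rcases lt_or_ge (R y x) (R x y) with h | h
    · rw [if_pos h, min_eq_right h.le]; ring
    · rw [if_neg (not_lt.mpr h), min_eq_left h]; ring
  constructor
  · refine ⟨?_, ?_, ?_, ?_⟩
    · intro x y hp
      simp only [P] at hp ⊢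
      split at hp
      · rename_i h
        rw [if_neg (not_lt.mpr h.le)]
      · exact absurd hp (lt_irrefl 0)
    · intro x y; simp only [I, min_comm]
    · intro x y; rw [hsum, min_eq_right (hR x y).2]
    · intro x y; rw [hsum]; exact max_eq_left (by linarith [(hR x y).2])
  · intro P' I' hP' hI' hasym hsym hRdec hTzero
    have hsum' : ∀ x y, P' x y + I' x y = R x y := by
      intro x y
      have h1 : P' x y + I' x y - 1 ≤ 0 := by
        have h2 := hTzero x y
        have h3 := le_max_right (0:ℝ) (P' x y + I' x y - 1)
        linarith [h2 ▸ h3]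
      rw [hRdec x y, min_eq_right (by linarith)]
    have hI : ∀ x y, I' x y = I x y := by
      intro x y
      simp only [I]
      rcases le_or_gt (P' x y) 0 with h | h
      · have hp0 : P' x y = 0 := le_antisymm h (hP' x y).1
        have hxy : I' x y = R x y := by have := hsum' x y; linarith
        have hyx : R x y ≤ R y x := by
          have h4 := hsum' y x
          have h5 := (hP' y x).1
          have h6 := hsym x y
          linarith
        rw [hxy, min_eq_left hyx]
      · have hp0 : P' y x = 0 := hasym x y h
        have hxy : I' x y = R y x := by
          have := hsum' y x; have := hsym x y; linarith
        have hyx : R y x ≤ R x y := by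
          have h4 := hsum' x y
          have h5 := (hP' x y).1
          linarith
        rw [hxy, min_eq_right hyx]
    constructor
    · funext x y
      have h1 := hsum' x y
      have h2 := hsum x y
      have h3 := hI x y
      linarith
    · funext x y; exact hI x y
end

section
/- No fuzzy binary relation space on a set X with at least two elements allows strong decomposition of all its members with respect to the product t-norm T_P(x,y) = xy together with any t-conorm S: there exists a fuzzy binary relation R on X that does not strongly decompose with respect to (T_P, S) for any t-conorm S. Specifically, for w ∈ (0,1), D⁰_{T_P}(w) = {0}, while any R with R(x,y) = 1 and R(y,x) = w ∈ (0,1) would require P(x,y) ∈ D¹_S(w) ∩ D⁰_{T_P}(w), forcing S(0,w) = 1, i.e., w = 1, a contradiction. -/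
/-- On a set with at least two elements, there is a fuzzy binary relation that does not
strongly decompose with respect to the product t-norm together with any t-conorm. -/
theorem product_tnorm_no_strong_decomposition {X : Type*} (hX : ∃ x y : X, x ≠ y) :
    ∃ R : X → X → unitInterval, ∀ S : Tconorm,
      ¬ ∃ P I : X → X → unitInterval, FAsymm P ∧ FSymm I ∧
          (∀ x y, R x y = S.S (P x y) (I x y)) ∧ ∀ x y, P x y * I x y = 0 := by
  
  classical
  obtain ⟨a, b, hab⟩ := hX
  set half : unitInterval := ⟨1/2, by norm_num⟩ with hhalf
  refine ⟨fun u v => if u = a ∧ v = b then 1 else if u = b ∧ v = a then half else 0,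
    fun S ⟨P, I, hP, hI, hR, hPI⟩ => ?_⟩
  have hRab : S.S (P a b) (I a b) = 1 := by
    have := (hR a b).symm
    simpa [hab] using this
  have hRba : S.S (P b a) (I b a) = half := by
    have := (hR b a).symm
    simpa [hab, Ne.symm hab] using this
  have hS0 : ∀ w, S.S 0 w = w := fun w => (S.comm 0 w).trans (S.S_zero w)
  have hmul : P a b = 0 ∨ I a b = 0 := by
    have h := hPI a b
    have : (P a b : ℝ) * (I a b : ℝ) = 0 := by
      have := congrArg (fun x : unitInterval => (x : ℝ)) h
      simpa using this
    rcases mul_eq_zero.mp this with h' | h'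
    · exact Or.inl (Subtype.ext h')
    · exact Or.inr (Subtype.ext h')
  rcases hmul with h0 | h0
  · -- P a b = 0, so I a b = 1, so I b a = 1, so R b a = 1 ≠ half
    have hIab : I a b = 1 := by
      have := hRab
      rwa [h0, hS0] at this
    have hIba : I b a = 1 := (hI b a).trans hIab
    have : S.S (P b a) (I b a) = 1 := by rw [hIba]; exact S.S_one _
    rw [hRba] at this
    have : (half : ℝ) = 1 := congrArg Subtype.val this
    norm_num [hhalf] at this
  · -- I a b = 0, so P a b = 1 > 0, so P b a = 0, so I b a = half but I b a = I a b = 0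
    have hPab : P a b = 1 := by
      have := hRab
      rwa [h0, S.S_zero] at this
    have hPpos : 0 < P a b := by rw [hPab]; norm_num
    have hPba : P b a = 0 := hP a b hPpos
    have hIba : I b a = half := by
      have := hRba
      rwa [hPba, hS0] at this
    have : I a b = half := (hI a b).trans hIba
    rw [h0] at this
    have : (0 : ℝ) = half := congrArg Subtype.val this
    norm_num [hhalf] at this
end

section
/- Let S be the ordinal-sum t-conorm defined by S(x,y) = min(0.5, x+y) if x,y ≤ 0.5 and S(x,y) = max(x,y) otherwise. Let X = {x,y} and R the fuzzy binary relation with R(x,y) = R(y,x) = 0.5 and R(x,x) = R(y,y) = 1. Then the pair (P,I) with I(x,x) = I(y,y) = 1, I(x,y) = I(y,x) = 0.5, P(x,y) = 0.5, and P zero elsewhere is a weak decomposition of R with respect to S, yet the triplet (R,P,I) fails property FP4 (since R(x,y) = R(y,x) but P(x,y) > 0) and hence is not a fuzzy preference. -/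
/-- The ordinal-sum t-conorm of a Łukasiewicz summand on `[0, 1/2]`. -/
noncomputable def Sord : ℝ → ℝ → ℝ := fun a b =>
  if a ≤ 1 / 2 ∧ b ≤ 1 / 2 then min (1 / 2) (a + b) else max a b

/-- With `X = {x, y}` (modelled by `Bool`, `x := true`, `y := false`), the relation `R`
with `R(x,y) = R(y,x) = 1/2` and `R(x,x) = R(y,y) = 1` weakly decomposes with respect to
`Sord` into the given `(P, I)`, yet `(R, P, I)` fails FP4 and hence is not a fuzzy
preference. -/
theorem ordinal_sum_decomposition_not_preference :
    let R : Bool → Bool → ℝ := fun a b => if a = b then 1 else 1 / 2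
    let I : Bool → Bool → ℝ := fun a b => if a = b then 1 else 1 / 2
    let P : Bool → Bool → ℝ := fun a b => if a = true ∧ b = false then 1 / 2 else 0
    ((∀ a b, 0 < P a b → P b a = 0) ∧
     (∀ a b, I a b = I b a) ∧
     (∀ a b, R a b = Sord (P a b) (I a b)) ∧
     (∀ a b, I a b = 1 → P a b = 0)) ∧
    (R true false = R false true ∧ 0 < P true false) ∧
    ¬ (∀ a b, R b a < R a b ↔ 0 < P a b) := by
  refine ⟨⟨?_, ?_, ?_, ?_⟩, ⟨?_, ?_⟩, ?_⟩
  · intro a b; cases a <;> cases b <;> simp <;> norm_num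
  · intro a b; cases a <;> cases b <;> simp
  · intro a b; cases a <;> cases b <;> simp [Sord] <;> norm_num
  · intro a b; cases a <;> cases b <;> simp <;> norm_num
  · norm_num
  · norm_num
  · intro h
    have := (h true false).mpr (by norm_num)
    norm_num at this
end
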